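/- Fix an integer k ≥ 1 and a rational number q, and set A_{n,k}(q) := Σ_{π ∈ R_{n,k}} q^{F_π}. In the ring of formal power series ℚ[[x]], the generating function Q_k(x;q) := Σ_{n ≥ k} A_{n,k}(q)·xⁿ satisfies Q_k(x;q) = q^k·x^k·(1 − k·x)⁻¹ + Σ_{i=1}^{k-1} i·q^i·x^{k+1}·Π_{j=i}^{k} (1 − j·x)⁻¹. -/

import Mathlib

open Finset
open scoped Classical

/-- `π : Fin n → ℕ` is a restricted growth sequence (entries are positive, the first entry
is `1`, and each entry exceeds the maximum of the previous entries by at most `1`;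
equivalently `π₁ = 1` and `π_{j+1} ≤ 1 + max {π₁, …, π_j}`). -/
def IsRGS {n : ℕ} (π : Fin n → ℕ) : Prop :=
  ∀ i : Fin n, 1 ≤ π i ∧ π i ≤ (Finset.univ.filter (fun j : Fin n => j < i)).sup π + 1

/-- The (finite) set `R_n` of restricted growth sequences of length `n`
(all such sequences take values in `{1, …, n}`). -/
noncomputable def RGS (n : ℕ) : Finset (Fin n → ℕ) :=
  (Fintype.piFinset fun _ : Fin n => Finset.Icc 1 n).filter IsRGS

/-- The (finite) set `R_{n,k}` of restricted growth sequences of length `n`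
with maximal letter `k`. -/
noncomputable def RGSk (n k : ℕ) : Finset (Fin n → ℕ) :=
  (RGS n).filter (fun π => Finset.univ.sup π = k)

/-- `F_π`: the number of fixed points of `π`, i.e. (1-indexed) positions `i` with `π_i = i`. -/
def fixCount {n : ℕ} (π : Fin n → ℕ) : ℕ :=
  (Finset.univ.filter (fun i : Fin n => π i = (i : ℕ) + 1)).card

namespace RGSAux

lemma rgs_le {n : ℕ} {π : Fin n → ℕ} (h : IsRGS π) (i : Fin n) : π i ≤ (i : ℕ) + 1 := by
  have H : ∀ m : ℕ, ∀ i : Fin n, (i : ℕ) = m → π i ≤ (i : ℕ) + 1 := by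
    intro m
    induction m using Nat.strong_induction_on with
    | _ m ih =>
      intro i him
      refine (h i).2.trans ?_
      have hs : (Finset.univ.filter (fun j : Fin n => j < i)).sup π ≤ (i : ℕ) := by
        apply Finset.sup_le
        intro j hj
        simp only [Finset.mem_filter, Finset.mem_univ, true_and] at hj
        have hji : (j : ℕ) < (i : ℕ) := hj
        have := ih (j : ℕ) (by omega) j rfl
        omega
      omega
  exact H (i : ℕ) i rfl

lemma mem_RGS {n : ℕ} {π : Fin n → ℕ} : π ∈ RGS n ↔ IsRGS π := by
  constructor
  · intro h; exact (Finset.mem_filter.mp h).2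
  · intro h
    refine Finset.mem_filter.mpr ⟨?_, h⟩
    refine Fintype.mem_piFinset.mpr fun i => Finset.mem_Icc.mpr ⟨(h i).1, ?_⟩
    have := rgs_le h i
    have := i.isLt
    omega

lemma sup_le_of_rgs {n : ℕ} {π : Fin n → ℕ} (h : IsRGS π) : Finset.univ.sup π ≤ n := by
  apply Finset.sup_le
  intro i _
  have := rgs_le h i
  have := i.isLt
  omega

lemma sup_snoc {n : ℕ} (σ : Fin n → ℕ) (v : ℕ) :
    Finset.univ.sup (Fin.snoc σ v : Fin (n+1) → ℕ) = max (Finset.univ.sup σ) v := by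
  rw [Fin.univ_castSuccEmb, Finset.sup_cons, Finset.sup_map]
  simp only [Fin.snoc_last]
  rw [max_comm]
  congr 1
  apply Finset.sup_congr rfl
  intro j _
  exact Fin.snoc_castSucc (α := fun _ => ℕ) (p := σ) (x := v) (i := j)

lemma filter_lt_castSucc {n : ℕ} (i : Fin n) :
    (Finset.univ.filter (fun j : Fin (n+1) => j < i.castSucc)) =
      (Finset.univ.filter (fun j : Fin n => j < i)).map Fin.castSuccEmb := by
  ext j
  simp only [Finset.mem_filter, Finset.mem_univ, true_and, Finset.mem_map]
  constructor
  · intro hj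
    have h1 : (j : ℕ) < (i : ℕ) := hj
    have h2 : (j : ℕ) < n := lt_of_lt_of_le h1 (Nat.le_of_lt_succ (Nat.lt_succ_of_lt i.isLt))
    refine ⟨⟨(j : ℕ), h2⟩, ?_, ?_⟩
    · exact h1
    · rfl
  · rintro ⟨a, ha, rfl⟩
    exact ha

lemma sup_filter_castSucc {n : ℕ} (σ : Fin n → ℕ) (v : ℕ) (i : Fin n) :
    (Finset.univ.filter (fun j : Fin (n+1) => j < i.castSucc)).sup (Fin.snoc σ v : Fin (n+1) → ℕ)
      = (Finset.univ.filter (fun j : Fin n => j < i)).sup σ := by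
  rw [filter_lt_castSucc, Finset.sup_map]
  apply Finset.sup_congr rfl
  intro j _
  exact Fin.snoc_castSucc (α := fun _ => ℕ) (p := σ) (x := v) (i := j)

lemma filter_lt_last (n : ℕ) :
    (Finset.univ.filter (fun j : Fin (n+1) => j < Fin.last n)) =
      (Finset.univ : Finset (Fin n)).map Fin.castSuccEmb := by
  ext j
  simp only [Finset.mem_filter, Finset.mem_univ, true_and, Finset.mem_map]
  constructor
  · intro hj
    have h2 : (j : ℕ) < n := hj
    exact ⟨⟨(j : ℕ), h2⟩, by apply Fin.ext; rfl⟩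
  · rintro ⟨a, _, rfl⟩
    exact a.isLt

lemma sup_filter_last {n : ℕ} (σ : Fin n → ℕ) (v : ℕ) :
    (Finset.univ.filter (fun j : Fin (n+1) => j < Fin.last n)).sup (Fin.snoc σ v : Fin (n+1) → ℕ)
      = Finset.univ.sup σ := by
  rw [filter_lt_last, Finset.sup_map]
  apply Finset.sup_congr rfl
  intro j _
  exact Fin.snoc_castSucc (α := fun _ => ℕ) (p := σ) (x := v) (i := j)

lemma isRGS_snoc_iff {n : ℕ} {σ : Fin n → ℕ} {v : ℕ} :
    IsRGS (Fin.snoc σ v : Fin (n+1) → ℕ) ↔ IsRGS σ ∧ 1 ≤ v ∧ v ≤ Finset.univ.sup σ + 1 := by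
  constructor
  · intro h
    refine ⟨?_, ?_, ?_⟩
    · intro i
      have hi := h i.castSucc
      rw [Fin.snoc_castSucc, sup_filter_castSucc] at hi
      exact hi
    · have := (h (Fin.last n)).1
      rwa [Fin.snoc_last] at this
    · have := (h (Fin.last n)).2
      rwa [Fin.snoc_last, sup_filter_last] at this
  · rintro ⟨hσ, hv1, hv2⟩
    intro i
    refine Fin.lastCases ?_ ?_ i
    · rw [Fin.snoc_last, sup_filter_last]
      exact ⟨hv1, hv2⟩
    · intro j
      rw [Fin.snoc_castSucc, sup_filter_castSucc]
      exact hσ j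

lemma fixCount_snoc {n : ℕ} (σ : Fin n → ℕ) (v : ℕ) :
    fixCount (Fin.snoc σ v : Fin (n+1) → ℕ) = fixCount σ + (if v = n + 1 then 1 else 0) := by
  unfold fixCount
  rw [Finset.card_filter, Finset.card_filter, Fin.sum_univ_castSucc]
  congr 1
  · apply Finset.sum_congr rfl
    intro j _
    simp [Fin.snoc_castSucc]
  · simp [Fin.snoc_last]

end RGSAux

namespace RGSAux

lemma sum_RGS_succ {n : ℕ} (g : (Fin (n+1) → ℕ) → ℚ) :
    ∑ π ∈ RGS (n+1), g π
      = ∑ σ ∈ RGS n, ∑ v ∈ Finset.Icc 1 (Finset.univ.sup σ + 1), g (Fin.snoc σ v) := by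
  rw [← Finset.sum_sigma (RGS n) (fun σ => Finset.Icc 1 (Finset.univ.sup σ + 1))
      (fun p => g (Fin.snoc p.1 p.2))]
  refine Finset.sum_bij' (fun π _ => (⟨Fin.init π, π (Fin.last n)⟩ :
      Σ _ : Fin n → ℕ, ℕ)) (fun p _ => Fin.snoc p.1 p.2) ?_ ?_ ?_ ?_ ?_
  · intro π hπ
    have hrgs : IsRGS π := mem_RGS.mp hπ
    have h2 : IsRGS (Fin.snoc (Fin.init π) (π (Fin.last n)) : Fin (n+1) → ℕ) := by
      rwa [Fin.snoc_init_self]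
    rw [isRGS_snoc_iff] at h2
    refine Finset.mem_sigma.mpr ⟨mem_RGS.mpr h2.1, Finset.mem_Icc.mpr ⟨h2.2.1, h2.2.2⟩⟩
  · intro p hp
    obtain ⟨hσ, hv⟩ := Finset.mem_sigma.mp hp
    rw [Finset.mem_Icc] at hv
    exact mem_RGS.mpr (isRGS_snoc_iff.mpr ⟨mem_RGS.mp hσ, hv.1, hv.2⟩)
  · intro π _
    exact Fin.snoc_init_self π
  · intro p _
    refine Sigma.ext ?_ ?_
    · exact Fin.init_snoc (α := fun _ => ℕ) (x := p.2) (p := p.1)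
    · simp [Fin.snoc_last]
  · intro π _
    rw [Fin.snoc_init_self]

noncomputable def Aq (q : ℚ) (n k : ℕ) : ℚ := ∑ π ∈ RGSk n k, q ^ fixCount π

lemma Aq_eq_zero (q : ℚ) {n k : ℕ} (h : n < k) : Aq q n k = 0 := by
  unfold Aq
  have : RGSk n k = ∅ := by
    rw [Finset.eq_empty_iff_forall_notMem]
    intro π hπ
    obtain ⟨h1, h2⟩ := Finset.mem_filter.mp hπ
    have := sup_le_of_rgs (mem_RGS.mp h1)
    omega
  simp [this]

lemma Aq_zero (q : ℚ) : Aq q 0 0 = 1 := by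
  have h1 : RGSk 0 0 = {fun i : Fin 0 => (i : ℕ)} := by
    ext π
    constructor
    · intro _
      refine Finset.mem_singleton.mpr (funext fun i => i.elim0)
    · intro _
      refine Finset.mem_filter.mpr ⟨Finset.mem_filter.mpr ⟨?_, fun i => i.elim0⟩, ?_⟩
      · exact Fintype.mem_piFinset.mpr fun i => i.elim0
      · simp
  rw [Aq, h1]
  simp [fixCount]

lemma Aq_rec (q : ℚ) (n k : ℕ) (hk : 1 ≤ k) :
    Aq q (n+1) k = k * Aq q n k + (if k = n + 1 then q else 1) * Aq q n (k-1) := by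
  have key : Aq q (n+1) k = ∑ σ ∈ RGS n,
      ∑ v ∈ Finset.Icc 1 (Finset.univ.sup σ + 1),
        (if max (Finset.univ.sup σ) v = k then
          q ^ fixCount σ * (if v = n + 1 then q else 1) else 0) := by
    rw [Aq, RGSk, Finset.sum_filter, sum_RGS_succ (fun π => if Finset.univ.sup π = k then q ^ fixCount π else 0)]
    refine Finset.sum_congr rfl fun σ _ => Finset.sum_congr rfl fun v _ => ?_
    rw [sup_snoc, fixCount_snoc]
    split_ifs with h1 h2 <;> simp [pow_succ]
  rw [key]
  have inner : ∀ σ ∈ RGS n,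
      (∑ v ∈ Finset.Icc 1 (Finset.univ.sup σ + 1),
        (if max (Finset.univ.sup σ) v = k then
          q ^ fixCount σ * (if v = n + 1 then q else 1) else 0))
      = (if Finset.univ.sup σ = k then (k : ℚ) * q ^ fixCount σ else 0)
        + (if Finset.univ.sup σ = k - 1 then (if k = n + 1 then q else 1) * q ^ fixCount σ else 0) := by
    intro σ hσ
    have hsn : Finset.univ.sup σ ≤ n := sup_le_of_rgs (mem_RGS.mp hσ)
    set s := Finset.univ.sup σ with hs
    by_cases h1 : s = k
    · -- inner values: v ∈ Icc 1 (k+1), condition max k v = k iff v ≤ k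
      rw [if_pos h1, if_neg (by omega)]
      have hkn : k ≤ n := by omega
      rw [add_zero]
      have : ∀ v ∈ Finset.Icc 1 (s + 1),
          (if max s v = k then q ^ fixCount σ * (if v = n + 1 then q else 1) else 0)
          = (if v ≤ k then q ^ fixCount σ else 0) := by
        intro v hv
        rw [Finset.mem_Icc] at hv
        by_cases hvk : v ≤ k
        · rw [if_pos hvk, if_pos (by omega), if_neg (by omega), mul_one]
        · rw [if_neg hvk, if_neg (by omega)]
      rw [Finset.sum_congr rfl this, Finset.sum_ite, Finset.sum_const, Finset.sum_const,
        smul_zero, add_zero]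
      have hfilter : (Finset.Icc 1 (s+1)).filter (fun v => v ≤ k) = Finset.Icc 1 k := by
        ext v
        simp only [Finset.mem_filter, Finset.mem_Icc]
        omega
      rw [hfilter, Nat.card_Icc]
      simp only [Nat.add_sub_cancel, nsmul_eq_mul]
    · rw [if_neg h1]
      by_cases h2 : s = k - 1
      · rw [if_pos h2, zero_add]
        have hskm : k = s + 1 := by omega
        have : ∀ v ∈ Finset.Icc 1 (s + 1),
            (if max s v = k then q ^ fixCount σ * (if v = n + 1 then q else 1) else 0)
            = (if v = s + 1 then q ^ fixCount σ * (if v = n + 1 then q else 1) else 0) := by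
          intro v hv
          rw [Finset.mem_Icc] at hv
          by_cases hvv : v = s + 1
          · rw [if_pos (by omega), if_pos hvv]
          · rw [if_neg (by omega), if_neg hvv]
        rw [Finset.sum_congr rfl this, Finset.sum_ite_eq' (Finset.Icc 1 (s+1)) (s+1)]
        rw [if_pos (Finset.mem_Icc.mpr ⟨by omega, le_refl _⟩)]
        by_cases h3 : k = n + 1
        · rw [if_pos (by omega), if_pos h3]; ring
        · rw [if_neg (by omega), if_neg h3]; ring
      · rw [if_neg h2, add_zero]
        apply Finset.sum_eq_zero
        intro v hv
        rw [Finset.mem_Icc] at hv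
        rw [if_neg (by omega)]
  rw [Finset.sum_congr rfl inner, Finset.sum_add_distrib]
  congr 1
  · rw [Aq, RGSk, Finset.sum_filter, Finset.mul_sum]
    apply Finset.sum_congr rfl
    intro σ _
    split_ifs <;> simp
  · rw [Aq, RGSk, Finset.sum_filter, Finset.mul_sum]
    apply Finset.sum_congr rfl
    intro σ _
    split_ifs <;> simp

lemma Aq_diag (q : ℚ) (n : ℕ) : Aq q n n = q ^ n := by
  induction n with
  | zero => rw [pow_zero]; exact Aq_zero q
  | succ m ih =>
    rw [Aq_rec q m (m+1) (by omega), if_pos rfl, Aq_eq_zero q (by omega),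
      Nat.add_sub_cancel, ih, mul_zero, zero_add, pow_succ]
    ring

end RGSAux

namespace RGSAux

open PowerSeries

noncomputable def u (a : ℕ) : PowerSeries ℚ := 1 - PowerSeries.C (a : ℚ) * PowerSeries.X

lemma u_mul_inv (a : ℕ) : u a * (u a)⁻¹ = 1 := by
  apply PowerSeries.mul_inv_cancel
  simp [u]

noncomputable def Lq (q : ℚ) (k : ℕ) : PowerSeries ℚ := PowerSeries.mk (fun n => Aq q n k)

noncomputable def Rq (q : ℚ) (k : ℕ) : PowerSeries ℚ :=
  PowerSeries.C (q ^ k) * PowerSeries.X ^ k * (u k)⁻¹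
    + ∑ i ∈ Finset.Ico 1 k,
        PowerSeries.C ((i : ℚ) * q ^ i) * PowerSeries.X ^ (k + 1)
          * ∏ j ∈ Finset.Icc i k, (u j)⁻¹

lemma Aq_pos_zero (q : ℚ) (n : ℕ) : Aq q (n+1) 0 = 0 := by
  unfold Aq
  have : RGSk (n+1) 0 = ∅ := by
    rw [Finset.eq_empty_iff_forall_notMem]
    intro π hπ
    obtain ⟨h1, h2⟩ := Finset.mem_filter.mp hπ
    have hr := mem_RGS.mp h1
    have h3 : 1 ≤ π ⟨0, by omega⟩ := (hr ⟨0, by omega⟩).1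
    have h4 : π ⟨0, by omega⟩ ≤ Finset.univ.sup π := Finset.le_sup (Finset.mem_univ _)
    omega
  simp [this]

lemma Lq_zero_eq (q : ℚ) : Lq q 0 = 1 := by
  ext m
  rw [Lq, PowerSeries.coeff_mk, PowerSeries.coeff_one]
  cases m with
  | zero => simp [Aq_zero]
  | succ m => simp [Aq_pos_zero]

lemma coeff_u_mul (a : ℕ) (f : PowerSeries ℚ) (m : ℕ) :
    PowerSeries.coeff m (u a * f)
      = PowerSeries.coeff m f - a * (if m = 0 then 0 else PowerSeries.coeff (m-1) f) := by
  rw [u, sub_mul, one_mul, map_sub, mul_assoc, PowerSeries.coeff_C_mul]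
  cases m with
  | zero => rw [PowerSeries.coeff_zero_X_mul]; simp
  | succ m => rw [PowerSeries.coeff_succ_X_mul]; simp

lemma Lq_rec (q : ℚ) (k : ℕ) (hk : 1 ≤ k) :
    u k * Lq q k
      = PowerSeries.C (q ^ k - q ^ (k-1)) * PowerSeries.X ^ k + PowerSeries.X * Lq q (k-1) := by
  ext m
  rw [coeff_u_mul, map_add, PowerSeries.coeff_C_mul, PowerSeries.coeff_X_pow]
  cases m with
  | zero =>
    rw [PowerSeries.coeff_zero_X_mul]
    simp only [Lq, PowerSeries.coeff_mk]
    rw [Aq_eq_zero q (by omega : 0 < k), if_neg (by omega : ¬ (0 : ℕ) = k)]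
    simp
  | succ m =>
    rw [PowerSeries.coeff_succ_X_mul]
    simp only [Lq, PowerSeries.coeff_mk]
    simp only [Nat.succ_ne_zero, if_false, Nat.add_sub_cancel]
    rw [Aq_rec q m k hk]
    by_cases h : k = m + 1
    · rw [if_pos h, if_pos h.symm, Aq_eq_zero q (by omega : m < k)]
      subst h
      rw [Nat.add_sub_cancel, Aq_diag]
      ring
    · rw [if_neg h, if_neg (fun hh => h hh.symm)]
      ring

lemma key_alg (q : ℚ) (k : ℕ) (hk : 1 ≤ k) :
    u (k+1) * Rq q (k+1)
      = PowerSeries.C (q ^ (k+1) - q ^ k) * PowerSeries.X ^ (k+1) + PowerSeries.X * Rq q k := by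
  unfold Rq
  rw [mul_add, Finset.mul_sum]
  have h1 := u_mul_inv (k+1)
  have h2 := u_mul_inv k
  have e1 : u (k+1) * (PowerSeries.C (q ^ (k+1)) * PowerSeries.X ^ (k+1) * (u (k+1))⁻¹)
      = PowerSeries.C (q ^ (k+1)) * PowerSeries.X ^ (k+1) := by
    linear_combination (PowerSeries.C (q ^ (k+1)) * PowerSeries.X ^ (k+1)) * h1
  rw [e1]
  have hsum : ∀ i ∈ Finset.Ico 1 (k+1),
      u (k+1) * (PowerSeries.C ((i : ℚ) * q ^ i) * PowerSeries.X ^ (k+1+1)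
          * ∏ j ∈ Finset.Icc i (k+1), (u j)⁻¹)
      = PowerSeries.X * (PowerSeries.C ((i : ℚ) * q ^ i) * PowerSeries.X ^ (k+1)
          * ∏ j ∈ Finset.Icc i k, (u j)⁻¹) := by
    intro i hi
    rw [Finset.mem_Ico] at hi
    rw [Finset.prod_Icc_succ_top (by omega : i ≤ k+1)]
    linear_combination (PowerSeries.X * (PowerSeries.C ((i : ℚ) * q ^ i)
      * PowerSeries.X ^ (k+1) * ∏ j ∈ Finset.Icc i k, (u j)⁻¹)) * h1
  rw [Finset.sum_congr rfl hsum, ← Finset.mul_sum, Finset.sum_Ico_succ_top hk,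
    Finset.Icc_self, Finset.prod_singleton]
  simp only [map_sub, map_mul]
  have h3 : u k = 1 - PowerSeries.C (k : ℚ) * PowerSeries.X := rfl
  linear_combination (-(PowerSeries.C (q ^ k) * PowerSeries.X ^ (k+1))) * h2
    + (PowerSeries.C (q ^ k) * PowerSeries.X ^ (k+1) * (u k)⁻¹) * h3

lemma eq_inv_mul_of (a : ℕ) (f g : PowerSeries ℚ) (h : u a * f = g) : f = (u a)⁻¹ * g := by
  have h2 := u_mul_inv a
  calc f = ((u a)⁻¹ * u a) * f := by rw [mul_comm (u a)⁻¹, h2, one_mul]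
  _ = (u a)⁻¹ * g := by rw [mul_assoc, h]

lemma main_eq (q : ℚ) (k : ℕ) (hk : 1 ≤ k) : Lq q k = Rq q k := by
  induction k, hk using Nat.le_induction with
  | base =>
    have hrec := Lq_rec q 1 (le_refl 1)
    have : Lq q 1 = (u 1)⁻¹ * (PowerSeries.C (q ^ 1 - q ^ 0) * PowerSeries.X ^ 1
        + PowerSeries.X * Lq q 0) := eq_inv_mul_of 1 _ _ hrec
    rw [this, Lq_zero_eq, Rq]
    rw [Finset.Ico_self, Finset.sum_empty, add_zero]
    simp only [map_sub, pow_zero, map_one, pow_one]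
    ring
  | succ k hk ih =>
    have hrec := Lq_rec q (k+1) (by omega)
    rw [Nat.add_sub_cancel, ih] at hrec
    have := eq_inv_mul_of (k+1) _ _ hrec
    rw [this, ← key_alg q k hk]
    rw [← mul_assoc, mul_comm ((u (k+1))⁻¹), u_mul_inv, one_mul]

end RGSAux

/-- Closed form for the ordinary generating function
`Q_k(x;q) = Σ_{n ≥ k} A_{n,k}(q) xⁿ` in `ℚ[[x]]`. -/
theorem rgs_fixpoint_ogf_closed_form (k : ℕ) (hk : 1 ≤ k) (q : ℚ) :
    (PowerSeries.mk fun n => if k ≤ n then ∑ π ∈ RGSk n k, q ^ fixCount π else 0)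
      = PowerSeries.C (q ^ k) * PowerSeries.X ^ k
          * (1 - PowerSeries.C (k : ℚ) * PowerSeries.X)⁻¹
        + ∑ i ∈ Finset.Ico 1 k,
            PowerSeries.C ((i : ℚ) * q ^ i) * PowerSeries.X ^ (k + 1)
              * ∏ j ∈ Finset.Icc i k, (1 - PowerSeries.C (j : ℚ) * PowerSeries.X)⁻¹ := by
  have h1 : (PowerSeries.mk fun n => if k ≤ n then ∑ π ∈ RGSk n k, q ^ fixCount π else 0)
      = RGSAux.Lq q k := by
    ext m
    simp only [PowerSeries.coeff_mk, RGSAux.Lq]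
    split_ifs with h
    · rfl
    · exact (RGSAux.Aq_eq_zero q (by omega)).symm
  rw [h1, RGSAux.main_eq q k hk]
  simp only [RGSAux.Rq, RGSAux.u]
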